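/- Let ρ : ℝ → ℝ be infinitely differentiable, nonnegative, supported in [−1,1], with ∫ρ = 1; for ε > 0 set ρ_ε(z) = ε⁻¹ρ(z/ε), and for h ∈ ℝ define K_{ε,h}(z) = ∫_ℝ ρ_ε(y)·max(z − y − h, 0) dy. Let h < h' and ε, ε' > 0 satisfy ε + ε' ≤ (h' − h)/2. Then for every z ∈ ℝ with K_{ε',h'}(z) > 0 one has K_{ε,h}(z) ≥ (h' − h)/2. -/
import Mathlib


open MeasureTheory

/-- The smoothed truncation `K_{ε,h} = ρ_ε ⋆ (· − h)₊`, where `ρ_ε(z) = ε⁻¹ ρ(z/ε)`: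
`K_{ε,h}(z) = ∫ ρ_ε(y) · max(z − y − h, 0) dy`. -/
noncomputable def mollK (ρ : ℝ → ℝ) (ε h z : ℝ) : ℝ :=
  ∫ y : ℝ, (ε⁻¹ * ρ (y / ε)) * max (z - y - h) 0

/-- Level-set nesting of consecutive smoothed cutoffs: if `h < h'` and
`ε, ε' > 0` with `ε + ε' ≤ (h' − h)/2`, then `K_{ε',h'}(z) > 0` implies
`K_{ε,h}(z) ≥ (h' − h)/2`. -/
theorem stmt_12 (ρ : ℝ → ℝ) (hρ_smooth : ContDiff ℝ (⊤ : ℕ∞) ρ) (hρ_nonneg : ∀ x, 0 ≤ ρ x)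
    (hρ_supp : Function.support ρ ⊆ Set.Icc (-1 : ℝ) 1) (hρ_int : ∫ x : ℝ, ρ x = 1)
    (h h' ε ε' : ℝ) (hhh : h < h') (hε : 0 < ε) (hε' : 0 < ε')
    (hsum : ε + ε' ≤ (h' - h) / 2) :
    ∀ z : ℝ, 0 < mollK ρ ε' h' z → (h' - h) / 2 ≤ mollK ρ ε h z := by
  have hρc : Continuous ρ := hρ_smooth.continuous
  -- support control: if ρ (x/e) ≠ 0 then x ∈ [-e, e]
  have hsupp : ∀ (e : ℝ), 0 < e → ∀ x : ℝ, ρ (x / e) ≠ 0 → -e ≤ x ∧ x ≤ e := by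
    intro e he x hx
    have hm := hρ_supp hx
    obtain ⟨h1, h2⟩ := hm
    constructor
    · nlinarith [(div_le_one he).mp h2, (le_div_iff₀ he).mp h1]
    · nlinarith [(div_le_one he).mp h2]
  -- integrability of ρ_e
  have hρε_int : ∀ (e : ℝ), 0 < e → Integrable (fun y : ℝ => e⁻¹ * ρ (y / e)) := by
    intro e he
    apply Continuous.integrable_of_hasCompactSupport
    · exact continuous_const.mul (hρc.comp (continuous_id.div_const e))
    · apply HasCompactSupport.intro (isCompact_Icc (a := -e) (b := e))
      intro x hx
      have : ρ (x / e) = 0 := by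
        by_contra h0
        exact hx ⟨(hsupp e he x h0).1, (hsupp e he x h0).2⟩
      simp [this]
  -- integral of ρ_e is 1
  have hint1 : ∀ (e : ℝ), 0 < e → ∫ y : ℝ, e⁻¹ * ρ (y / e) = 1 := by
    intro e he
    rw [integral_const_mul, Measure.integral_comp_div (fun x => ρ x) e, hρ_int,
      abs_of_pos he]
    simp [ne_of_gt he]
  -- integrability of the full integrand
  have hkey : ∀ (e hh : ℝ), 0 < e → ∀ z : ℝ,
      Integrable (fun y : ℝ => (e⁻¹ * ρ (y / e)) * max (z - y - hh) 0) := by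
    intro e hh he z
    apply Continuous.integrable_of_hasCompactSupport
    · exact (continuous_const.mul (hρc.comp (continuous_id.div_const e))).mul
        (((continuous_const.sub continuous_id).sub continuous_const).max continuous_const)
    · apply HasCompactSupport.intro (isCompact_Icc (a := -e) (b := e))
      intro x hx
      have : ρ (x / e) = 0 := by
        by_contra h0
        exact hx ⟨(hsupp e he x h0).1, (hsupp e he x h0).2⟩
      simp [this]
  intro z hz
  -- from positivity, z > h' - ε'
  have hzlb : h' - ε' ≤ z := by
    by_contra hle
    push_neg at hle
    have : mollK ρ ε' h' z = 0 := by
      unfold mollK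
      rw [integral_eq_zero_of_ae]
      filter_upwards with y
      by_cases h0 : ρ (y / ε') = 0
      · simp [h0]
      · have hy := (hsupp ε' hε' y h0).1
        have : max (z - y - h') 0 = 0 := max_eq_right (by linarith)
        simp [this]
    linarith [hz, this]
  -- lower bound
  set c := (h' - h) / 2 with hc
  have hmono : ∀ y : ℝ, (ε⁻¹ * ρ (y / ε)) * c ≤ (ε⁻¹ * ρ (y / ε)) * max (z - y - h) 0 := by
    intro y
    by_cases h0 : ρ (y / ε) = 0
    · simp [h0]
    · have hy := (hsupp ε hε y h0).2
      have hge : c ≤ z - y - h := by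
        have : h' - ε' - ε - h ≥ c := by simp [hc]; linarith
        linarith
      have : c ≤ max (z - y - h) 0 := le_trans hge (le_max_left _ _)
      exact mul_le_mul_of_nonneg_left this
        (mul_nonneg (inv_nonneg.mpr hε.le) (hρ_nonneg _))
  have hax : ∫ y : ℝ, (ε⁻¹ * ρ (y / ε)) * c ≤ mollK ρ ε h z := by
    unfold mollK
    apply integral_mono _ (hkey ε h hε z) hmono
    exact (hρε_int ε hε).mul_const c
  have : ∫ y : ℝ, (ε⁻¹ * ρ (y / ε)) * c = c := by
    rw [integral_mul_const, hint1 ε hε, one_mul]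
  linarith [hax, this.symm.le]
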